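/- arXiv:2603.25679 — 2 statements merged into one kernel-verified Lean document; each statement's English description precedes it below -/
import Mathlib

section
/- If d ≤ n, then every finitely n-presented R-module of projective dimension at most d is finitely ∞-presented, i.e., FP_n^{≤d}(R) ⊆ FP_∞(R); consequently FP_n^{≤d}(R) is closed under kernels of epimorphisms between its members. -/
universe u

set_option synthInstance.maxHeartbeats 1000000
set_option maxSynthPendingDepth 3
set_option maxHeartbeats 1600000

/-- `M` is a finitely `n`-presented `R`-module. -/
def FinNPres (R : Type u) [Ring R] : ℕ → (M : Type u) → [AddCommGroup M] → [Module R M] → Prop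
  | 0, M, _, _ => Module.Finite R M
  | n+1, M, _, _ => ∃ (k : ℕ) (f : (Fin k → R) →ₗ[R] M), Function.Surjective f ∧
      FinNPres R n (LinearMap.ker f)

/-- `M` has projective dimension at most `d` (finite `d`). -/
def ProjDimLE (R : Type u) [Ring R] : ℕ → (M : Type u) → [AddCommGroup M] → [Module R M] → Prop
  | 0, M, _, _ => Module.Projective R M
  | d+1, M, _, _ => ∃ (ι : Type u) (f : (ι →₀ R) →ₗ[R] M), Function.Surjective f ∧
      ProjDimLE R d (LinearMap.ker f)

variable {R : Type u} [Ring R]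
open LinearMap Function


-- equiv transfer
theorem pdle_equiv : ∀ (d : ℕ) (M N : Type u) [AddCommGroup M] [Module R M] [AddCommGroup N]
    [Module R N] (_ : M ≃ₗ[R] N), ProjDimLE R d M → ProjDimLE R d N
  | 0, M, N, _, _, _, _, e, h => by
    haveI : Module.Projective R M := h
    exact Module.Projective.of_equiv e
  | d+1, M, N, _, _, _, _, e, ⟨ι, f, hf, hk⟩ => by
    refine ⟨ι, e.toLinearMap ∘ₗ f, (EquivLike.surjective e).comp hf, ?_⟩
    have : LinearMap.ker (e.toLinearMap ∘ₗ f) = LinearMap.ker f := LinearMap.ker_comp_of_ker_eq_bot f e.ker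
    rw [this]
    exact hk

theorem fnp_equiv : ∀ (n : ℕ) (M N : Type u) [AddCommGroup M] [Module R M] [AddCommGroup N]
    [Module R N] (_ : M ≃ₗ[R] N), FinNPres R n M → FinNPres R n N
  | 0, M, N, _, _, _, _, e, h => by
    haveI : Module.Finite R M := h
    exact Module.Finite.equiv e
  | n+1, M, N, _, _, _, _, e, ⟨k, f, hf, hk⟩ => by
    refine ⟨k, e.toLinearMap ∘ₗ f, (EquivLike.surjective e).comp hf, ?_⟩
    rw [LinearMap.ker_comp_of_ker_eq_bot f e.ker]
    exact hk

/-- A split surjection decomposes the domain as kernel × codomain. -/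
noncomputable def splitEquiv {X B : Type u} [AddCommGroup X] [Module R X] [AddCommGroup B]
    [Module R B] (π : X →ₗ[R] B) (s : B →ₗ[R] X) (h : π ∘ₗ s = LinearMap.id) :
    X ≃ₗ[R] (LinearMap.ker π) × B := by
  have hp : ∀ b, π (s b) = b := fun b => congrArg (· b) (congrArg DFunLike.coe h)
  refine LinearEquiv.ofLinear
    (LinearMap.prod (LinearMap.codRestrict (LinearMap.ker π) (LinearMap.id - s ∘ₗ π)
      (fun c => by simp [hp])) π)
    (LinearMap.coprod (LinearMap.ker π).subtype s) ?_ ?_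
  · ext x <;> simp [hp, Subtype.ext_iff]
  · ext x <;> simp [hp, Subtype.ext_iff]
open LinearMap Function

lemma ker_restrict_setup {G M N : Type u} [AddCommGroup G] [Module R G] [AddCommGroup M]
    [Module R M] [AddCommGroup N] [Module R N] (p : G →ₗ[R] M) (hp : Surjective p)
    (f : M →ₗ[R] N) :
    ∃ π : (LinearMap.ker (f ∘ₗ p)) →ₗ[R] (LinearMap.ker f), Surjective π ∧
      Nonempty ((LinearMap.ker π) ≃ₗ[R] (LinearMap.ker p)) := by
  refine ⟨p.restrict (p := LinearMap.ker (f ∘ₗ p)) (q := LinearMap.ker f)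
    (fun x hx => by simpa using hx), ?_, ?_⟩
  · rintro ⟨m, hm⟩
    obtain ⟨x, rfl⟩ := hp m
    exact ⟨⟨x, by simpa using hm⟩, rfl⟩
  · refine ⟨LinearEquiv.ofBijective
      (LinearMap.restrict ((LinearMap.ker (f ∘ₗ p)).subtype)
        (p := _) (q := LinearMap.ker p) (fun x hx => ?_)) ⟨?_, ?_⟩⟩
    · simp only [LinearMap.mem_ker] at hx ⊢
      have : p x.1 = 0 := congrArg Subtype.val hx
      simpa using this
    · intro a b hab
      simp only [Subtype.ext_iff, LinearMap.restrict_apply] at hab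
      exact Subtype.ext (Subtype.ext hab)
    · rintro ⟨z, hz⟩
      have hz' : p z = 0 := by simpa using hz
      refine ⟨⟨⟨z, by simp [hz']⟩, ?_⟩, rfl⟩
      simp only [LinearMap.mem_ker]
      exact Subtype.ext (by simpa [LinearMap.restrict_apply] using hz')
set_option maxHeartbeats 1000000 in
/-- Schanuel's lemma. -/
lemma schanuel {A B N : Type u} [AddCommGroup A] [Module R A] [AddCommGroup B] [Module R B]
    [AddCommGroup N] [Module R N] [Module.Projective R A] [Module.Projective R B]
    (f : A →ₗ[R] N) (g : B →ₗ[R] N) (hf : Surjective f) (hg : Surjective g) :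
    Nonempty (((LinearMap.ker f) × B) ≃ₗ[R] ((LinearMap.ker g) × A)) := by
  set φ : (A × B) →ₗ[R] N := f ∘ₗ LinearMap.fst R A B - g ∘ₗ LinearMap.snd R A B with hφ
  set X := LinearMap.ker φ
  obtain ⟨hA, hhA⟩ := Module.projective_lifting_property g f hg
  obtain ⟨hB, hhB⟩ := Module.projective_lifting_property f g hf
  have hhA' : ∀ a, g (hA a) = f a := fun a => congrArg (· a) (congrArg DFunLike.coe hhA)
  have hhB' : ∀ b, f (hB b) = g b := fun b => congrArg (· b) (congrArg DFunLike.coe hhB)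
  -- second projection
  let π₂ : X →ₗ[R] B := LinearMap.snd R A B ∘ₗ X.subtype
  let s₂ : B →ₗ[R] X := LinearMap.codRestrict X (LinearMap.prod hB LinearMap.id)
    (fun b => by simp [X, φ, hhB'])
  have hs₂ : π₂ ∘ₗ s₂ = LinearMap.id := by ext b; rfl
  -- first projection
  let π₁ : X →ₗ[R] A := LinearMap.fst R A B ∘ₗ X.subtype
  let s₁ : A →ₗ[R] X := LinearMap.codRestrict X (LinearMap.prod LinearMap.id hA)
    (fun a => by simp [X, φ, hhA'])
  have hs₁ : π₁ ∘ₗ s₁ = LinearMap.id := by ext a; rfl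
  -- ker π₂ ≃ ker f
  have k₂ : (LinearMap.ker π₂) ≃ₗ[R] (LinearMap.ker f) := by
    refine LinearEquiv.ofBijective
      (LinearMap.restrict (LinearMap.fst R A B ∘ₗ X.subtype) (p := LinearMap.ker π₂)
        (q := LinearMap.ker f) (fun x hx => ?_)) ⟨?_, ?_⟩
    · have hx2 : (x : A × B).2 = 0 := hx
      have hxX : φ (x : A × B) = 0 := x.2
      simp only [φ, LinearMap.sub_apply, LinearMap.comp_apply, LinearMap.fst_apply,
        LinearMap.snd_apply, hx2, map_zero, sub_zero] at hxX
      simpa using hxX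
    · intro a b hab
      simp only [Subtype.ext_iff, LinearMap.restrict_apply] at hab
      have h2a : ((a : X) : A × B).2 = 0 := a.2
      have h2b : ((b : X) : A × B).2 = 0 := b.2
      have : ((a : X) : A × B) = ((b : X) : A × B) := Prod.ext hab (h2a.trans h2b.symm)
      exact Subtype.ext (Subtype.ext this)
    · rintro ⟨a, ha⟩
      have haf : f a = 0 := ha
      refine ⟨⟨⟨(a, 0), by simp [X, φ, haf]⟩, rfl⟩, rfl⟩
  -- ker π₁ ≃ ker g
  have k₁ : (LinearMap.ker π₁) ≃ₗ[R] (LinearMap.ker g) := by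
    refine LinearEquiv.ofBijective
      (LinearMap.restrict (LinearMap.snd R A B ∘ₗ X.subtype) (p := LinearMap.ker π₁)
        (q := LinearMap.ker g) (fun x hx => ?_)) ⟨?_, ?_⟩
    · have hx1 : (x : A × B).1 = 0 := hx
      have hxX : φ (x : A × B) = 0 := x.2
      simp only [φ, LinearMap.sub_apply, LinearMap.comp_apply, LinearMap.fst_apply,
        LinearMap.snd_apply, hx1, map_zero, zero_sub, neg_eq_zero] at hxX
      simpa using hxX
    · intro a b hab
      simp only [Subtype.ext_iff, LinearMap.restrict_apply] at hab
      have h1a : ((a : X) : A × B).1 = 0 := a.2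
      have h1b : ((b : X) : A × B).1 = 0 := b.2
      have : ((a : X) : A × B) = ((b : X) : A × B) := Prod.ext (h1a.trans h1b.symm) hab
      exact Subtype.ext (Subtype.ext this)
    · rintro ⟨b, hb⟩
      have hbg : g b = 0 := hb
      refine ⟨⟨⟨(0, b), by simp [X, φ, hbg]⟩, rfl⟩, rfl⟩
  have e₂ : X ≃ₗ[R] (LinearMap.ker π₂) × B := splitEquiv π₂ s₂ hs₂
  have e₁ : X ≃ₗ[R] (LinearMap.ker π₁) × A := splitEquiv π₁ s₁ hs₁
  have c₁ : ((LinearMap.ker f) × B) ≃ₗ[R] ((LinearMap.ker π₂) × B) :=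
    k₂.symm.prodCongr (LinearEquiv.refl R B)
  have c₂ : ((LinearMap.ker π₁) × A) ≃ₗ[R] ((LinearMap.ker g) × A) :=
    k₁.prodCongr (LinearEquiv.refl R A)
  exact ⟨c₁.trans (e₂.symm.trans (e₁.trans c₂))⟩

/-- kernel of composition with an equivalence. -/
lemma kerCompEquiv {P Q M : Type u} [AddCommGroup P] [Module R P] [AddCommGroup Q] [Module R Q]
    [AddCommGroup M] [Module R M] (e : P ≃ₗ[R] Q) (u : Q →ₗ[R] M) :
    Nonempty ((LinearMap.ker (u ∘ₗ e.toLinearMap)) ≃ₗ[R] (LinearMap.ker u)) := by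
  refine ⟨LinearEquiv.ofBijective
    (e.toLinearMap.restrict (p := LinearMap.ker (u ∘ₗ e.toLinearMap)) (q := LinearMap.ker u)
      (fun x hx => by simpa using hx)) ⟨?_, ?_⟩⟩
  · intro a b hab
    simp only [Subtype.ext_iff, LinearMap.restrict_apply] at hab
    exact Subtype.ext (e.injective hab)
  · rintro ⟨q, hq⟩
    exact ⟨⟨e.symm q, by simpa using hq⟩, Subtype.ext (by simp)⟩

/-- `Submodule.prod` as a product of types. -/
noncomputable def prodSubEquiv {M N : Type u} [AddCommGroup M] [Module R M] [AddCommGroup N]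
    [Module R N] (p : Submodule R M) (q : Submodule R N) :
    (Submodule.prod p q : Submodule R (M × N)) ≃ₗ[R] p × q := by
  refine LinearEquiv.ofBijective
    (LinearMap.prod
      ((LinearMap.fst R M N).restrict (p := Submodule.prod p q) (q := p) (fun x hx => hx.1))
      ((LinearMap.snd R M N).restrict (p := Submodule.prod p q) (q := q) (fun x hx => hx.2)))
    ⟨?_, ?_⟩
  · intro a b hab
    simp only [Prod.ext_iff, Subtype.ext_iff, LinearMap.prod_apply, Pi.prod,
      LinearMap.restrict_apply] at hab
    exact Subtype.ext (Prod.ext hab.1 hab.2)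
  · rintro ⟨⟨a, ha⟩, ⟨b, hb⟩⟩
    exact ⟨⟨(a, b), ⟨ha, hb⟩⟩, rfl⟩

/-- product of projectives is projective -/
lemma proj_prod {A B : Type u} [AddCommGroup A] [Module R A] [AddCommGroup B] [Module R B]
    (hA : Module.Projective R A) (hB : Module.Projective R B) : Module.Projective R (A × B) := by
  obtain ⟨sA, hsA⟩ := Module.projective_def.mp hA
  obtain ⟨sB, hsB⟩ := Module.projective_def.mp hB
  exact Module.Projective.of_split
    (M := (A →₀ R) × (B →₀ R))
    (LinearMap.prodMap sA sB)
    (LinearMap.prodMap (Finsupp.linearCombination R _root_.id) (Finsupp.linearCombination R _root_.id))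
    (LinearMap.ext fun x => Prod.ext (hsA x.1) (hsB x.2))

/-- Projective modules have projective dimension ≤ d for every d. -/
theorem pdle_proj : ∀ (d : ℕ) (M : Type u) [AddCommGroup M] [Module R M],
    Module.Projective R M → ProjDimLE R d M
  | 0, M, _, _, h => h
  | d+1, M, _, _, h => by
    haveI := h
    let f : (M →₀ R) →ₗ[R] M := Finsupp.linearCombination R _root_.id
    have hf : Surjective f := Finsupp.linearCombination_id_surjective R M
    obtain ⟨s, hs⟩ := Module.projective_lifting_property f LinearMap.id hf
    have e : (M →₀ R) ≃ₗ[R] (LinearMap.ker f) × M := splitEquiv f s hs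
    have hker : Module.Projective R (LinearMap.ker f) :=
      Module.Projective.of_split (M := M →₀ R)
        (e.symm.toLinearMap ∘ₗ LinearMap.inl R (LinearMap.ker f) M)
        ((LinearMap.fst R (LinearMap.ker f) M) ∘ₗ e.toLinearMap)
        (by ext x; simp)
    exact ⟨M, f, hf, pdle_proj d _ hker⟩

/-- products -/
theorem pdle_prod : ∀ (d : ℕ) (A B : Type u) [AddCommGroup A] [Module R A] [AddCommGroup B]
    [Module R B], ProjDimLE R d A → ProjDimLE R d B → ProjDimLE R d (A × B)
  | 0, A, B, _, _, _, _, hA, hB => proj_prod hA hB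
  | d+1, A, B, _, _, _, _, ⟨ι, f, hf, hkf⟩, ⟨κ, g, hg, hkg⟩ => by
    let e : ((ι ⊕ κ) →₀ R) ≃ₗ[R] (ι →₀ R) × (κ →₀ R) := Finsupp.sumFinsuppLEquivProdFinsupp R
    refine ⟨ι ⊕ κ, (f.prodMap g) ∘ₗ e.toLinearMap, ?_, ?_⟩
    · exact (hf.prodMap hg).comp e.surjective
    · obtain ⟨e1⟩ := kerCompEquiv e (f.prodMap g)
      have e2 : (LinearMap.ker (f.prodMap g)) ≃ₗ[R] (LinearMap.ker f) × (LinearMap.ker g) := by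
        rw [LinearMap.ker_prodMap]
        exact prodSubEquiv _ _
      exact pdle_equiv d _ _ (e1.trans e2).symm (pdle_prod d _ _ hkf hkg)

/-- monotone -/
theorem pdle_mono : ∀ (d d' : ℕ), d ≤ d' → ∀ (M : Type u) [AddCommGroup M] [Module R M],
    ProjDimLE R d M → ProjDimLE R d' M
  | 0, d', _, M, _, _, h => pdle_proj d' M h
  | d+1, d'+1, hdd', M, _, _, ⟨ι, f, hf, hk⟩ =>
    ⟨ι, f, hf, pdle_mono d d' (Nat.succ_le_succ_iff.mp hdd') _ hk⟩

set_option maxHeartbeats 1600000 in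
/-- Retract closure of finite projective dimension. -/
theorem pdle_retract (d : ℕ) : ∀ (A B : Type u) [AddCommGroup A] [Module R A] [AddCommGroup B]
    [Module R B] (i : A →ₗ[R] B) (r : B →ₗ[R] A), r ∘ₗ i = LinearMap.id →
    ProjDimLE R d B → ProjDimLE R d A := by
  induction d with
  | zero =>
    intro A B _ _ _ _ i r hri hB
    haveI : Module.Projective R B := hB
    exact Module.Projective.of_split i r hri
  | succ d ih =>
    intro A B _ _ _ _ i r hri hB
    obtain ⟨ι, g, hg, hkg⟩ := hB
    have hri' : ∀ a, r (i a) = a := fun a => congrArg (· a) (congrArg DFunLike.coe hri)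
    -- canonical free presentation of A
    let fa : (A →₀ R) →ₗ[R] A := Finsupp.linearCombination R _root_.id
    have hfa : Surjective fa := Finsupp.linearCombination_id_surjective R A
    -- the big surjection onto B
    let h₀ : ((A →₀ R) × (ι →₀ R)) →ₗ[R] B := LinearMap.coprod (i ∘ₗ fa) g
    have hh₀ : Surjective h₀ := fun b => by
      obtain ⟨y, hy⟩ := hg b
      exact ⟨(0, y), by simp [h₀, hy]⟩
    -- pd (ker h₀) ≤ d  via Schanuel against g
    haveI : Module.Projective R ((A →₀ R) × (ι →₀ R)) :=
      proj_prod inferInstance inferInstance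
    obtain ⟨es⟩ := schanuel h₀ g hh₀ hg
    have h1 : ProjDimLE R d ((LinearMap.ker g) × ((A →₀ R) × (ι →₀ R))) :=
      pdle_prod d _ _ hkg (pdle_proj d _ inferInstance)
    have h2 : ProjDimLE R d ((LinearMap.ker h₀) × (ι →₀ R)) :=
      pdle_equiv d _ _ es.symm h1
    have h3 : ProjDimLE R d (LinearMap.ker h₀) :=
      ih _ _ (LinearMap.inl R _ _) (LinearMap.fst R _ _) (by ext x : 1; rfl) h2
    -- ker fa is a retract of ker h₀
    obtain ⟨t, ht⟩ := Module.projective_lifting_property fa (r ∘ₗ g) hfa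
    have ht' : ∀ y, fa (t y) = r (g y) := fun y => congrArg (· y) (congrArg DFunLike.coe ht)
    have hii : Function.Injective i := by
      intro a b hab
      have := congrArg r hab
      rwa [hri', hri'] at this
    let j : (LinearMap.ker fa) →ₗ[R] (LinearMap.ker h₀) :=
      LinearMap.codRestrict _ ((LinearMap.inl R (A →₀ R) (ι →₀ R)) ∘ₗ (LinearMap.ker fa).subtype)
        (fun c => by
          have hc : fa (c : A →₀ R) = 0 := c.2
          simp [h₀, hc])
    let p : (LinearMap.ker h₀) →ₗ[R] (LinearMap.ker fa) :=
      LinearMap.codRestrict _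
        ((LinearMap.coprod LinearMap.id t) ∘ₗ (LinearMap.ker h₀).subtype)
        (fun c => by
          have hc : h₀ ((c : LinearMap.ker h₀) : (A →₀ R) × (ι →₀ R)) = 0 := c.2
          simp only [h₀, LinearMap.coprod_apply, LinearMap.comp_apply] at hc
          have := congrArg r hc
          simp only [map_add, hri', map_zero] at this
          simp only [LinearMap.mem_ker, LinearMap.comp_apply, Submodule.coe_subtype,
            LinearMap.coprod_apply, LinearMap.id_apply, map_add, ht']
          exact this)
    have hpj : p ∘ₗ j = LinearMap.id := by
      ext x : 1
      apply Subtype.ext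
      change (x : A →₀ R) + t 0 = x
      simp
    have h4 : ProjDimLE R d (LinearMap.ker fa) := ih _ _ j p hpj h3
    exact ⟨A, fa, hfa, h4⟩

set_option maxHeartbeats 1600000 in
/-- Horseshoe construction: combining free covers of the kernel and the quotient. -/
lemma horseshoe_core {FA FC B C : Type u} [AddCommGroup FA] [Module R FA] [AddCommGroup FC]
    [Module R FC] [AddCommGroup B] [Module R B] [AddCommGroup C] [Module R C]
    (f : B →ₗ[R] C) (pA : FA →ₗ[R] (LinearMap.ker f)) (hpA : Surjective pA)
    (pC : FC →ₗ[R] C) (hpC : Surjective pC) (t : FC →ₗ[R] B) (ht' : ∀ y, f (t y) = pC y) :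
    ∃ (h₀ : (FA × FC) →ₗ[R] B) (π : (LinearMap.ker h₀) →ₗ[R] (LinearMap.ker pC)),
      Surjective h₀ ∧ Surjective π ∧ Nonempty ((LinearMap.ker π) ≃ₗ[R] (LinearMap.ker pA)) := by
  classical
  refine ⟨LinearMap.coprod ((LinearMap.ker f).subtype ∘ₗ pA) t, ?_, ?_, ?_, ?_⟩
  case refine_1 =>
    -- π
    refine LinearMap.codRestrict (LinearMap.ker pC)
      ((LinearMap.snd R FA FC) ∘ₗ (LinearMap.ker _).subtype) (fun x => ?_)
    have hx : (LinearMap.coprod ((LinearMap.ker f).subtype ∘ₗ pA) t)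
        ((x : _) : FA × FC) = 0 := x.2
    simp only [LinearMap.coprod_apply, LinearMap.comp_apply, Submodule.coe_subtype] at hx
    have := congrArg f hx
    have hpa0 : f ((pA ((x : _) : FA × FC).1 : LinearMap.ker f) : B) = 0 := (pA _).2
    simp only [map_add, map_zero, hpa0, ht', zero_add] at this
    simpa using this
  case refine_2 =>
    -- h₀ surjective
    intro b
    obtain ⟨y, hy⟩ := hpC (f b)
    have hbk : b - t y ∈ LinearMap.ker f := by simp [ht', hy]
    obtain ⟨x, hx⟩ := hpA ⟨b - t y, hbk⟩
    refine ⟨(x, y), ?_⟩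
    have : ((pA x : LinearMap.ker f) : B) = b - t y := congrArg Subtype.val hx
    simp [this]
  case refine_3 =>
    -- π surjective
    rintro ⟨y, hy⟩
    have hty : t y ∈ LinearMap.ker f := by
      simp only [LinearMap.mem_ker] at hy ⊢
      simp [ht', hy]
    obtain ⟨x, hx⟩ := hpA (-⟨t y, hty⟩)
    have hx' : ((pA x : LinearMap.ker f) : B) = -(t y) := congrArg Subtype.val hx
    refine ⟨⟨(x, y), ?_⟩, Subtype.ext rfl⟩
    simp [hx']
  case refine_4 =>
    -- ker π ≃ ker pA
    set h₀ := LinearMap.coprod ((LinearMap.ker f).subtype ∘ₗ pA) t with hh₀def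
    refine ⟨LinearEquiv.ofBijective (LinearMap.codRestrict (LinearMap.ker pA)
      ((LinearMap.fst R FA FC) ∘ₗ (LinearMap.ker h₀).subtype ∘ₗ (LinearMap.ker _).subtype)
      (fun x => ?_)) ⟨?_, ?_⟩⟩
    · -- membership : pA of first component is zero
      have hx2 : ((((x : _) : LinearMap.ker h₀) : FA × FC)).2 = 0 := congrArg Subtype.val x.2
      have hx : h₀ ((((x : _) : LinearMap.ker h₀) : FA × FC)) = 0 := ((x : _) : LinearMap.ker h₀).2
      simp only [hh₀def, LinearMap.coprod_apply, LinearMap.comp_apply, Submodule.coe_subtype,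
        hx2, map_zero, add_zero] at hx
      have : (pA ((((x : _) : LinearMap.ker h₀) : FA × FC)).1 : LinearMap.ker f) = 0 :=
        Subtype.ext (by simpa using hx)
      simpa using this
    · -- injective
      intro a b hab
      have h1 : ((((a : _) : LinearMap.ker h₀) : FA × FC)).1
          = ((((b : _) : LinearMap.ker h₀) : FA × FC)).1 := by
        simpa [Subtype.ext_iff] using hab
      have h2a : ((((a : _) : LinearMap.ker h₀) : FA × FC)).2 = 0 := congrArg Subtype.val a.2
      have h2b : ((((b : _) : LinearMap.ker h₀) : FA × FC)).2 = 0 := congrArg Subtype.val b.2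
      exact Subtype.ext (Subtype.ext (Prod.ext h1 (h2a.trans h2b.symm)))
    · -- surjective
      rintro ⟨u, hu⟩
      have hu' : pA u = 0 := hu
      have hmem : (u, (0 : FC)) ∈ LinearMap.ker h₀ := by
        simp [hh₀def, hu']
      refine ⟨⟨⟨(u, 0), hmem⟩, Subtype.ext rfl⟩, Subtype.ext rfl⟩

/-- Kernel of a projective cover of a module of projective dimension ≤ d+1. -/
theorem pdle_descent (d : ℕ) {F M : Type u} [AddCommGroup F] [Module R F] [AddCommGroup M]
    [Module R M] [Module.Projective R F] (f : F →ₗ[R] M) (hf : Surjective f)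
    (hM : ProjDimLE R (d+1) M) : ProjDimLE R d (LinearMap.ker f) := by
  obtain ⟨ι, g, hg, hkg⟩ := hM
  obtain ⟨es⟩ := schanuel f g hf hg
  have h1 : ProjDimLE R d ((LinearMap.ker g) × F) :=
    pdle_prod d _ _ hkg (pdle_proj d _ inferInstance)
  have h2 : ProjDimLE R d ((LinearMap.ker f) × (ι →₀ R)) := pdle_equiv d _ _ es.symm h1
  exact pdle_retract d _ _ (LinearMap.inl R _ _) (LinearMap.fst R _ _) (by ext x : 1; rfl) h2

/-- Extension closure for projective dimension. -/
theorem pdle_ext (e : ℕ) : ∀ (B C : Type u) [AddCommGroup B] [Module R B] [AddCommGroup C]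
    [Module R C] (f : B →ₗ[R] C), Surjective f → ProjDimLE R e (LinearMap.ker f) →
    ProjDimLE R e C → ProjDimLE R e B := by
  induction e with
  | zero =>
    intro B C _ _ _ _ f hf hK hC
    haveI : Module.Projective R C := hC
    haveI : Module.Projective R (LinearMap.ker f) := hK
    obtain ⟨s, hs⟩ := Module.projective_lifting_property f LinearMap.id hf
    have e : B ≃ₗ[R] (LinearMap.ker f) × C := splitEquiv f s hs
    haveI : Module.Projective R ((LinearMap.ker f) × C) := proj_prod inferInstance inferInstance
    exact Module.Projective.of_equiv e.symm
  | succ e ih =>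
    intro B C _ _ _ _ f hf hK hC
    obtain ⟨ι, pA, hpA, hkA⟩ := hK
    obtain ⟨κ, pC, hpC, hkC⟩ := hC
    obtain ⟨t, ht⟩ := Module.projective_lifting_property f pC hf
    have ht' : ∀ y, f (t y) = pC y := fun y => congrArg (· y) (congrArg DFunLike.coe ht)
    obtain ⟨h₀, π, hh₀, hπ, ⟨eπ⟩⟩ := horseshoe_core f pA hpA pC hpC t ht'
    have hkπ : ProjDimLE R e (LinearMap.ker π) := pdle_equiv e (LinearMap.ker pA) (LinearMap.ker π) eπ.symm hkA
    have hker : ProjDimLE R e (LinearMap.ker h₀) := ih _ _ π hπ hkπ hkC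
    let eS : ((ι ⊕ κ) →₀ R) ≃ₗ[R] (ι →₀ R) × (κ →₀ R) := Finsupp.sumFinsuppLEquivProdFinsupp R
    obtain ⟨ec⟩ := kerCompEquiv eS h₀
    exact ⟨ι ⊕ κ, h₀ ∘ₗ eS.toLinearMap, hh₀.comp eS.surjective,
      pdle_equiv e _ _ ec.symm hker⟩

/-- Quotient: pd C ≤ d + 1 when pd B ≤ d and pd (ker f) ≤ d. -/
theorem pdle_quot (d : ℕ) {B C : Type u} [AddCommGroup B] [Module R B] [AddCommGroup C]
    [Module R C] (f : B →ₗ[R] C) (hf : Surjective f) (hB : ProjDimLE R d B)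
    (hK : ProjDimLE R d (LinearMap.ker f)) : ProjDimLE R (d+1) C := by
  let q : (B →₀ R) →ₗ[R] B := Finsupp.linearCombination R _root_.id
  have hq : Surjective q := Finsupp.linearCombination_id_surjective R B
  have hkq : ProjDimLE R d (LinearMap.ker q) :=
    pdle_descent d q hq (pdle_mono d (d+1) (Nat.le_succ d) _ hB)
  obtain ⟨π, hπ, ⟨eπ⟩⟩ := ker_restrict_setup q hq f
  have hkπ : ProjDimLE R d (LinearMap.ker π) := pdle_equiv d (LinearMap.ker q) (LinearMap.ker π) eπ.symm hkq
  have : ProjDimLE R d (LinearMap.ker (f ∘ₗ q)) := pdle_ext d _ _ π hπ hkπ hK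
  exact ⟨B, f ∘ₗ q, hf.comp hq, this⟩

/-- Kernel of an epimorphism between modules of projective dimension ≤ d. -/
theorem pdle_ker : ∀ (d : ℕ) (M N : Type u) [AddCommGroup M] [Module R M] [AddCommGroup N]
    [Module R N] (f : M →ₗ[R] N), Surjective f → ProjDimLE R d M → ProjDimLE R d N →
    ProjDimLE R d (LinearMap.ker f)
  | 0, M, N, _, _, _, _, f, hf, hM, hN => by
    haveI : Module.Projective R M := hM
    haveI : Module.Projective R N := hN
    obtain ⟨s, hs⟩ := Module.projective_lifting_property f LinearMap.id hf
    have e : M ≃ₗ[R] (LinearMap.ker f) × N := splitEquiv f s hs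
    exact Module.Projective.of_split (M := M)
      (e.symm.toLinearMap ∘ₗ LinearMap.inl R (LinearMap.ker f) N)
      ((LinearMap.fst R (LinearMap.ker f) N) ∘ₗ e.toLinearMap)
      (by ext x; simp)
  | d+1, M, N, _, _, _, _, f, hf, hM, hN => by
    let q : (M →₀ R) →ₗ[R] M := Finsupp.linearCombination R _root_.id
    have hq : Surjective q := Finsupp.linearCombination_id_surjective R M
    have hkq : ProjDimLE R d (LinearMap.ker q) := pdle_descent d q hq hM
    have hkfq : ProjDimLE R d (LinearMap.ker (f ∘ₗ q)) := pdle_descent d (f ∘ₗ q) (hf.comp hq) hN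
    obtain ⟨π, hπ, ⟨eπ⟩⟩ := ker_restrict_setup q hq f
    have hkπ : ProjDimLE R d (LinearMap.ker π) := pdle_equiv d (LinearMap.ker q) (LinearMap.ker π) eπ.symm hkq
    exact pdle_quot d π hπ hkfq hkπ

/-- Finitely n-presented modules are finitely generated. -/
theorem fnp_fin : ∀ (n : ℕ) (M : Type u) [AddCommGroup M] [Module R M],
    FinNPres R n M → Module.Finite R M
  | 0, M, _, _, h => h
  | n+1, M, _, _, ⟨k, f, hf, _⟩ => Module.Finite.of_surjective f hf

/-- Finitely generated projective modules are finitely n-presented for every n. -/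
theorem fnp_of_fg_proj : ∀ (n : ℕ) (M : Type u) [AddCommGroup M] [Module R M],
    Module.Finite R M → Module.Projective R M → FinNPres R n M
  | 0, M, _, _, hfin, _ => hfin
  | n+1, M, _, _, hfin, hproj => by
    haveI : Module.Finite R M := hfin; haveI : Module.Projective R M := hproj
    obtain ⟨k, f, hf⟩ := Module.Finite.exists_fin' R M
    obtain ⟨s, hs⟩ := Module.projective_lifting_property f LinearMap.id hf
    have e : (Fin k → R) ≃ₗ[R] (LinearMap.ker f) × M := splitEquiv f s hs
    have hr : Surjective ((LinearMap.fst R (LinearMap.ker f) M) ∘ₗ e.toLinearMap) := by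
      intro x
      exact ⟨e.symm (x, 0), by simp⟩
    have hkfin : Module.Finite R (LinearMap.ker f) := Module.Finite.of_surjective _ hr
    have hkproj : Module.Projective R (LinearMap.ker f) :=
      Module.Projective.of_split (M := (Fin k → R))
        (e.symm.toLinearMap ∘ₗ LinearMap.inl R (LinearMap.ker f) M)
        ((LinearMap.fst R (LinearMap.ker f) M) ∘ₗ e.toLinearMap)
        (by ext x; simp)
    exact ⟨k, f, hf, fnp_of_fg_proj n _ hkfin hkproj⟩

/-- Finite free modules are finitely n-presented. -/
theorem fnp_free (n k : ℕ) : FinNPres R n (Fin k → R) :=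
  fnp_of_fg_proj n _ inferInstance inferInstance

/-- Products of finitely n-presented modules. -/
theorem fnp_prod : ∀ (n : ℕ) (A B : Type u) [AddCommGroup A] [Module R A] [AddCommGroup B]
    [Module R B], FinNPres R n A → FinNPres R n B → FinNPres R n (A × B)
  | 0, A, B, _, _, _, _, hA, hB => by
    haveI : Module.Finite R A := hA; haveI : Module.Finite R B := hB
    exact Module.Finite.prod
  | n+1, A, B, _, _, _, _, ⟨k, f, hf, hkf⟩, ⟨l, g, hg, hkg⟩ => by
    let e : (Fin (k+l) → R) ≃ₗ[R] (Fin k → R) × (Fin l → R) :=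
      (LinearEquiv.funCongrLeft R R finSumFinEquiv).trans
        (LinearEquiv.sumArrowLequivProdArrow _ _ R R)
    refine ⟨k + l, (f.prodMap g) ∘ₗ e.toLinearMap, (hf.prodMap hg).comp e.surjective, ?_⟩
    obtain ⟨e1⟩ := kerCompEquiv e (f.prodMap g)
    have e2 : (LinearMap.ker (f.prodMap g)) ≃ₗ[R] (LinearMap.ker f) × (LinearMap.ker g) := by
      rw [LinearMap.ker_prodMap]
      exact prodSubEquiv _ _
    exact fnp_equiv n _ _ (e1.trans e2).symm (fnp_prod n _ _ hkf hkg)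

set_option maxHeartbeats 1600000 in
/-- A direct summand with finite free complement of a finitely n-presented module. -/
theorem fnp_drop_free : ∀ (n : ℕ) (A : Type u) [AddCommGroup A] [Module R A] (l : ℕ),
    FinNPres R n (A × (Fin l → R)) → FinNPres R n A
  | 0, A, _, _, l, h => by
    haveI : Module.Finite R (A × (Fin l → R)) := h
    exact Module.Finite.of_surjective (LinearMap.fst R A (Fin l → R)) Prod.fst_surjective
  | n+1, A, _, _, l, ⟨k, h, hh, hker⟩ => by
    let F := Fin l → R
    let h1 : (Fin k → R) →ₗ[R] A := (LinearMap.fst R A F) ∘ₗ h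
    have hh1 : Surjective h1 := Prod.fst_surjective.comp hh
    let q : (LinearMap.ker h1) →ₗ[R] F :=
      (LinearMap.snd R A F) ∘ₗ h ∘ₗ (LinearMap.ker h1).subtype
    have hq : Surjective q := by
      intro z
      obtain ⟨x, hx⟩ := hh (0, z)
      refine ⟨⟨x, by simp [h1, hx]⟩, by simp [q, hx]⟩
    obtain ⟨s, hs⟩ := Module.projective_lifting_property q LinearMap.id hq
    have e : (LinearMap.ker h1) ≃ₗ[R] (LinearMap.ker q) × F := splitEquiv q s hs
    -- ker q ≃ ker h
    have e2 : (LinearMap.ker q) ≃ₗ[R] (LinearMap.ker h) := by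
      refine LinearEquiv.ofBijective (LinearMap.codRestrict (LinearMap.ker h)
        ((LinearMap.ker h1).subtype ∘ₗ (LinearMap.ker q).subtype) (fun x => ?_)) ⟨?_, ?_⟩
      · have hx1 : h1 ((x : LinearMap.ker h1) : Fin k → R) = 0 := (x : LinearMap.ker h1).2
        have hx2 : q (x : LinearMap.ker h1) = 0 := x.2
        simp only [h1, LinearMap.comp_apply] at hx1
        simp only [q, LinearMap.comp_apply, Submodule.coe_subtype] at hx2
        simp only [LinearMap.mem_ker, LinearMap.comp_apply, Submodule.coe_subtype]
        exact Prod.ext hx1 hx2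
      · intro a b hab
        simp only [Subtype.ext_iff, LinearMap.codRestrict_apply, LinearMap.comp_apply,
          Submodule.coe_subtype] at hab
        exact Subtype.ext (Subtype.ext hab)
      · rintro ⟨z, hz⟩
        have hz' : h z = 0 := hz
        have hz1 : z ∈ LinearMap.ker h1 := by simp [h1, hz']
        have hzq : (⟨z, hz1⟩ : LinearMap.ker h1) ∈ LinearMap.ker q := by simp [q, hz']
        exact ⟨⟨⟨z, hz1⟩, hzq⟩, rfl⟩
    have hkq : FinNPres R n (LinearMap.ker q) := fnp_equiv n _ _ e2.symm hker
    have : FinNPres R n (LinearMap.ker h1) :=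
      fnp_equiv n _ _ e.symm (fnp_prod n _ _ hkq (fnp_free n l))
    exact ⟨k, h1, hh1, this⟩

/-- Independence of presentation: kernel of any finite free cover. -/
theorem fnp_pres_indep (n : ℕ) {N : Type u} [AddCommGroup N] [Module R N] {k : ℕ}
    (f : (Fin k → R) →ₗ[R] N) (hf : Surjective f) (hN : FinNPres R (n+1) N) :
    FinNPres R n (LinearMap.ker f) := by
  obtain ⟨l, g, hg, hkerg⟩ := hN
  obtain ⟨es⟩ := schanuel f g hf hg
  have h1 : FinNPres R n ((LinearMap.ker g) × (Fin k → R)) :=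
    fnp_prod n _ _ hkerg (fnp_free n k)
  have h2 : FinNPres R n ((LinearMap.ker f) × (Fin l → R)) := fnp_equiv n _ _ es.symm h1
  exact fnp_drop_free n _ l h2

/-- FP_{n+1} ⊆ FP_n. -/
theorem fnp_of_succ : ∀ (n : ℕ) (M : Type u) [AddCommGroup M] [Module R M],
    FinNPres R (n+1) M → FinNPres R n M
  | 0, M, _, _, h => fnp_fin 1 M h
  | n+1, M, _, _, ⟨k, f, hf, hk⟩ => ⟨k, f, hf, fnp_of_succ n _ hk⟩

/-- Extension closure for finite n-presentation. -/
theorem fnp_ext (n : ℕ) : ∀ (B C : Type u) [AddCommGroup B] [Module R B] [AddCommGroup C]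
    [Module R C] (f : B →ₗ[R] C), Surjective f → FinNPres R n (LinearMap.ker f) →
    FinNPres R n C → FinNPres R n B := by
  induction n with
  | zero =>
    intro B C _ _ _ _ f hf hK hC
    haveI : Module.Finite R C := hC
    haveI : Module.Finite R (LinearMap.ker f) := hK
    constructor
    apply Submodule.fg_of_fg_map_of_fg_inf_ker f
    · rw [Submodule.map_top, LinearMap.range_eq_top.mpr hf]
      exact Module.Finite.fg_top
    · rw [top_inf_eq]
      exact Module.Finite.iff_fg.mp hK
  | succ n ih =>
    intro B C _ _ _ _ f hf hK hC
    obtain ⟨a, pA, hpA, hkA⟩ := hK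
    obtain ⟨c, pC, hpC, hkC⟩ := hC
    obtain ⟨t, ht⟩ := Module.projective_lifting_property f pC hf
    have ht' : ∀ y, f (t y) = pC y := fun y => congrArg (· y) (congrArg DFunLike.coe ht)
    obtain ⟨h₀, π, hh₀, hπ, ⟨eπ⟩⟩ := horseshoe_core f pA hpA pC hpC t ht'
    have hkπ : FinNPres R n (LinearMap.ker π) :=
      fnp_equiv n (LinearMap.ker pA) (LinearMap.ker π) eπ.symm hkA
    have hker : FinNPres R n (LinearMap.ker h₀) := ih _ _ π hπ hkπ hkC
    let e : (Fin (a+c) → R) ≃ₗ[R] (Fin a → R) × (Fin c → R) :=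
      (LinearEquiv.funCongrLeft R R finSumFinEquiv).trans
        (LinearEquiv.sumArrowLequivProdArrow _ _ R R)
    obtain ⟨ec⟩ := kerCompEquiv e h₀
    exact ⟨a + c, h₀ ∘ₗ e.toLinearMap, hh₀.comp e.surjective, fnp_equiv n _ _ ec.symm hker⟩

/-- Main: finitely n-presented of projective dimension ≤ d ≤ n is finitely ∞-presented. -/
theorem fnp_all : ∀ (d n : ℕ), d ≤ n → ∀ (M : Type u) [AddCommGroup M] [Module R M],
    FinNPres R n M → ProjDimLE R d M → ∀ k, FinNPres R k M
  | 0, n, _, M, _, _, hfp, hpd, k => fnp_of_fg_proj k M (fnp_fin n M hfp) hpd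
  | d+1, n, hdn, M, _, _, hfp, hpd, k => by
    obtain ⟨m, rfl⟩ : ∃ m, n = m + 1 := ⟨n-1, by omega⟩
    obtain ⟨k0, f, hf, hker⟩ := hfp
    have hpk : ProjDimLE R d (LinearMap.ker f) := pdle_descent d f hf hpd
    have hall := fnp_all d m (by omega) _ hker hpk
    cases k with
    | zero => exact fnp_fin (m+1) M ⟨k0, f, hf, hker⟩
    | succ j => exact ⟨k0, f, hf, hall j⟩

/-- Kernels of epimorphisms between finitely ∞-presented modules. -/
theorem fnp_ker (n : ℕ) {M N : Type u} [AddCommGroup M] [Module R M] [AddCommGroup N]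
    [Module R N] (f : M →ₗ[R] N) (hf : Surjective f) (hM : ∀ k, FinNPres R k M)
    (hN : ∀ k, FinNPres R k N) : FinNPres R n (LinearMap.ker f) := by
  haveI : Module.Finite R M := fnp_fin 0 M (hM 0)
  obtain ⟨k0, p, hp⟩ := Module.Finite.exists_fin' R M
  have hkfp : ∀ j, FinNPres R j (LinearMap.ker (f ∘ₗ p)) :=
    fun j => fnp_pres_indep j (f ∘ₗ p) (hf.comp hp) (hN (j+1))
  have hkp : ∀ j, FinNPres R j (LinearMap.ker p) :=
    fun j => fnp_pres_indep j p hp (hM (j+1))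
  obtain ⟨π, hπ, ⟨eπ⟩⟩ := ker_restrict_setup p hp f
  cases n with
  | zero =>
    haveI : Module.Finite R (LinearMap.ker (f ∘ₗ p)) := fnp_fin 0 _ (hkfp 0)
    exact Module.Finite.of_surjective π hπ
  | succ n =>
    haveI : Module.Finite R (LinearMap.ker (f ∘ₗ p)) := fnp_fin 0 _ (hkfp 0)
    obtain ⟨a, q, hq⟩ := Module.Finite.exists_fin' R (LinearMap.ker (f ∘ₗ p))
    obtain ⟨π', hπ', ⟨eπ'⟩⟩ := ker_restrict_setup q hq π
    have hkq : FinNPres R n (LinearMap.ker q) := fnp_pres_indep n q hq (hkfp (n+1))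
    have hkπ : FinNPres R n (LinearMap.ker π) :=
      fnp_equiv n (LinearMap.ker p) (LinearMap.ker π) eπ.symm (hkp n)
    have hkπ' : FinNPres R n (LinearMap.ker π') :=
      fnp_equiv n (LinearMap.ker q) (LinearMap.ker π') eπ'.symm hkq
    have : FinNPres R n (LinearMap.ker (π ∘ₗ q)) := fnp_ext n _ _ π' hπ' hkπ' hkπ
    exact ⟨a, π ∘ₗ q, hπ.comp hq, this⟩

/-- If `d ≤ n`, then every finitely `n`-presented module of projective dimension at most `d`
is finitely `∞`-presented (i.e. finitely `k`-presented for every `k`); consequently, the class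
`FPₙ^{≤d}(R)` is closed under kernels of epimorphisms between its members. -/
theorem fp_n_le_d_subset_fp_infty_of_le (R : Type u) [Ring R] (n d : ℕ) (hdn : d ≤ n) :
    (∀ (M : Type u) [AddCommGroup M] [Module R M],
        FinNPres R n M → ProjDimLE R d M → ∀ k : ℕ, FinNPres R k M) ∧
    (∀ (M N : Type u) [AddCommGroup M] [Module R M] [AddCommGroup N] [Module R N]
        (f : M →ₗ[R] N), Function.Surjective f →
        FinNPres R n M → ProjDimLE R d M → FinNPres R n N → ProjDimLE R d N →
        FinNPres R n (LinearMap.ker f) ∧ ProjDimLE R d (LinearMap.ker f)) := by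
  constructor
  · intro M _ _ hfp hpd k
    exact fnp_all d n hdn M hfp hpd k
  · intro M N _ _ _ _ f hf hfpM hpdM hfpN hpdN
    refine ⟨?_, pdle_ker d M N f hf hpdM hpdN⟩
    exact fnp_ker n f hf (fnp_all d n hdn M hfpM hpdM) (fnp_all d n hdn N hfpN hpdN)
end

section
/- Let P ↣ N ↠ M be a short exact sequence of R-modules where N is (n,d)-coherent. If P is finitely (n-1)-presented with projective dimension at most d-1, then both M and P are (n,d)-coherent. -/
universe u

/-- Projective dimension at most `d` for `d : ℕ∞`; `d = ⊤` imposes no condition. -/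
def ProjDimLE' (R : Type u) [Ring R] (d : ℕ∞) (M : Type u) [AddCommGroup M] [Module R M] : Prop :=
  ∀ k : ℕ, (k : ℕ∞) = d → ProjDimLE R k M

section Aux

variable {R : Type u} [Ring R]

theorem finNPres_congr : ∀ (n : ℕ) {M M' : Type u} [AddCommGroup M] [Module R M]
    [AddCommGroup M'] [Module R M'] (_ : M ≃ₗ[R] M'), FinNPres R n M → FinNPres R n M'
  | 0, M, M', _, _, _, _, e, h => by
    haveI : Module.Finite R M := h
    exact Module.Finite.equiv e
  | (n+1), M, M', _, _, _, _, e, ⟨k, f, hs, hk⟩ => by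
    refine ⟨k, e.toLinearMap ∘ₗ f, e.surjective.comp hs, ?_⟩
    have hker : LinearMap.ker (e.toLinearMap ∘ₗ f) = LinearMap.ker f := by
      rw [LinearMap.ker_comp, LinearEquiv.ker, Submodule.comap_bot]
    rw [hker]; exact hk

theorem projDimLE_congr : ∀ (d : ℕ) {M M' : Type u} [AddCommGroup M] [Module R M]
    [AddCommGroup M'] [Module R M'] (_ : M ≃ₗ[R] M'), ProjDimLE R d M → ProjDimLE R d M'
  | 0, M, M', _, _, _, _, e, h => by
    haveI : Module.Projective R M := h
    exact Module.Projective.of_equiv e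
  | (d+1), M, M', _, _, _, _, e, ⟨ι, f, hs, hk⟩ => by
    refine ⟨ι, e.toLinearMap ∘ₗ f, e.surjective.comp hs, ?_⟩
    have hker : LinearMap.ker (e.toLinearMap ∘ₗ f) = LinearMap.ker f := by
      rw [LinearMap.ker_comp, LinearEquiv.ker, Submodule.comap_bot]
    rw [hker]; exact hk

/-- Horseshoe-type construction for a short exact sequence. -/
theorem horseshoe {P N M F₁ F₂ : Type u} [AddCommGroup P] [Module R P]
    [AddCommGroup N] [Module R N] [AddCommGroup M] [Module R M]
    [AddCommGroup F₁] [Module R F₁] [AddCommGroup F₂] [Module R F₂]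
    (f : P →ₗ[R] N) (g : N →ₗ[R] M) (hf : Function.Injective f)
    (hex : LinearMap.range f = LinearMap.ker g)
    (a : F₁ →ₗ[R] P) (ha : Function.Surjective a)
    (c : F₂ →ₗ[R] M) (hc : Function.Surjective c)
    (h : F₂ →ₗ[R] N) (hh : g ∘ₗ h = c) :
    Function.Surjective (LinearMap.coprod (f ∘ₗ a) h) ∧
      ∃ (f' : LinearMap.ker a →ₗ[R] LinearMap.ker (LinearMap.coprod (f ∘ₗ a) h))
        (g' : LinearMap.ker (LinearMap.coprod (f ∘ₗ a) h) →ₗ[R] LinearMap.ker c),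
        Function.Injective f' ∧ Function.Surjective g' ∧
          LinearMap.range f' = LinearMap.ker g' := by
  set b : F₁ × F₂ →ₗ[R] N := LinearMap.coprod (f ∘ₗ a) h with hbdef
  have hbapp : ∀ x y, b (x, y) = f (a x) + h y := fun x y => rfl
  have hgh : ∀ y, g (h y) = c y := fun y => congrFun (congrArg DFunLike.coe hh) y
  have hgf : ∀ p, g (f p) = 0 := fun p =>
    (hex ▸ LinearMap.mem_range_self f p : f p ∈ LinearMap.ker g)
  have hbsurj : Function.Surjective b := by
    intro nn
    obtain ⟨y, hy⟩ := hc (g nn)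
    have hker : nn - h y ∈ LinearMap.ker g := by
      simp [LinearMap.mem_ker, map_sub, hgh, hy]
    obtain ⟨p, hp⟩ := (hex ▸ hker : nn - h y ∈ LinearMap.range f)
    obtain ⟨x, hx⟩ := ha p
    exact ⟨(x, y), by rw [hbapp, hx, hp]; abel⟩
  refine ⟨hbsurj, ?_⟩
  have hmem₁ : ∀ x : LinearMap.ker a,
      ((LinearMap.inl R F₁ F₂) ∘ₗ (LinearMap.ker a).subtype) x ∈ LinearMap.ker b := by
    intro x
    have hx : a x.1 = 0 := x.2
    show b (x.1, 0) = 0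
    rw [hbapp, hx, map_zero, map_zero, add_zero]
  set f' : LinearMap.ker a →ₗ[R] LinearMap.ker b :=
    LinearMap.codRestrict _ ((LinearMap.inl R F₁ F₂) ∘ₗ (LinearMap.ker a).subtype) hmem₁
    with hf'def
  have hmem₂ : ∀ z : LinearMap.ker b,
      ((LinearMap.snd R F₁ F₂) ∘ₗ (LinearMap.ker b).subtype) z ∈ LinearMap.ker c := by
    intro z
    have hz : f (a z.1.1) + h z.1.2 = 0 := z.2
    show c z.1.2 = 0
    rw [← hgh]
    have : h z.1.2 = -f (a z.1.1) := by linear_combination (norm := abel) hz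
    rw [this, map_neg, hgf, neg_zero]
  set g' : LinearMap.ker b →ₗ[R] LinearMap.ker c :=
    LinearMap.codRestrict _ ((LinearMap.snd R F₁ F₂) ∘ₗ (LinearMap.ker b).subtype) hmem₂
    with hg'def
  have hf'app : ∀ x : LinearMap.ker a, (f' x : F₁ × F₂) = (x.1, 0) := fun _ => rfl
  have hg'app : ∀ z : LinearMap.ker b, (g' z : F₂) = z.1.2 := fun _ => rfl
  refine ⟨f', g', ?_, ?_, ?_⟩
  · intro x y hxy
    apply Subtype.ext
    have h2 : (f' x : F₁ × F₂) = (f' y : F₁ × F₂) := congrArg Subtype.val hxy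
    rw [hf'app, hf'app] at h2
    exact congrArg Prod.fst h2
  · rintro ⟨y, hy⟩
    have hcy : c y = 0 := hy
    have : h y ∈ LinearMap.ker g := by
      simp [LinearMap.mem_ker, hgh, hcy]
    obtain ⟨p, hp⟩ := (hex ▸ this : h y ∈ LinearMap.range f)
    obtain ⟨x, hx⟩ := ha (-p)
    have hmem : (x, y) ∈ LinearMap.ker b := by
      show b (x, y) = 0
      rw [hbapp, hx, map_neg, hp]; abel
    exact ⟨⟨(x, y), hmem⟩, rfl⟩
  · apply le_antisymm
    · rintro z ⟨x, rfl⟩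
      show g' (f' x) = 0
      exact Subtype.ext rfl
    · rintro ⟨⟨x, y⟩, hz⟩ hzk
      have hy0 : y = 0 := congrArg Subtype.val (hzk : g' _ = 0)
      subst hy0
      have hbz : f (a x) + h 0 = 0 := hz
      have hax : a x = 0 := by
        apply hf
        rw [map_zero, add_zero] at hbz
        rw [hbz, map_zero]
      exact ⟨⟨x, hax⟩, Subtype.ext rfl⟩

/-- In a short exact sequence, if the outer terms are finitely `n`-presented
then so is the middle one. -/
theorem finNPres_ext : ∀ (n : ℕ) {P N M : Type u} [AddCommGroup P] [Module R P]
    [AddCommGroup N] [Module R N] [AddCommGroup M] [Module R M]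
    (f : P →ₗ[R] N) (g : N →ₗ[R] M) (_ : Function.Injective f) (_ : Function.Surjective g)
    (_ : LinearMap.range f = LinearMap.ker g),
    FinNPres R n P → FinNPres R n M → FinNPres R n N
  | 0, P, N, M, _, _, _, _, _, _, f, g, hf, hg, hex, hP, hM => by
    have h1 : (⊤ : Submodule R M).FG := hM.fg_top
    have h2 : (⊤ : Submodule R P).FG := hP.fg_top
    refine ⟨Submodule.fg_of_fg_map_of_fg_inf_ker g ?_ ?_⟩
    · rw [Submodule.map_top, LinearMap.range_eq_top.mpr hg]; exact h1
    · rw [top_inf_eq, ← hex, ← Submodule.map_top]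
      exact Submodule.FG.map f h2
  | (n+1), P, N, M, _, _, _, _, _, _, f, g, hf, hg, hex, ⟨j, a, ha, hka⟩,
      ⟨k, c, hc, hkc⟩ => by
    classical
    set B := Pi.basisFun R (Fin k) with hB
    set h : (Fin k → R) →ₗ[R] N := B.constr ℕ (fun i => (hg (c (B i))).choose) with hhdef
    have hh : g ∘ₗ h = c := by
      apply B.ext
      intro i
      show g (h (B i)) = c (B i)
      rw [hhdef, B.constr_basis]
      exact (hg (c (B i))).choose_spec
    obtain ⟨hbsurj, f', g', hf', hg', hex'⟩ := horseshoe f g hf hex a ha c hc h hh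
    have hkb : FinNPres R n (LinearMap.ker (LinearMap.coprod (f ∘ₗ a) h)) :=
      finNPres_ext n f' g' hf' hg' hex' hka hkc
    set b := LinearMap.coprod (f ∘ₗ a) h with hbdef
    set e : (Fin (j + k) → R) ≃ₗ[R] (Fin j → R) × (Fin k → R) :=
      (LinearEquiv.funCongrLeft R R finSumFinEquiv).trans
        (LinearEquiv.sumArrowLequivProdArrow (Fin j) (Fin k) R R) with hedef
    refine ⟨j + k, b ∘ₗ e.toLinearMap, hbsurj.comp e.surjective, ?_⟩
    have hker : Submodule.map e.toLinearMap (LinearMap.ker (b ∘ₗ e.toLinearMap))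
        = LinearMap.ker b := by
      rw [LinearMap.ker_comp]
      exact Submodule.map_comap_eq_of_surjective (f := e.toLinearMap)
        (by exact e.surjective) _
    exact finNPres_congr n
      ((LinearEquiv.ofEq _ _ hker.symm).trans
        (e.submoduleMap (LinearMap.ker (b ∘ₗ e.toLinearMap))).symm) hkb

/-- In a short exact sequence, if the outer terms have projective dimension
at most `d` then so does the middle one. -/
theorem projDimLE_ext : ∀ (d : ℕ) {P N M : Type u} [AddCommGroup P] [Module R P]
    [AddCommGroup N] [Module R N] [AddCommGroup M] [Module R M]
    (f : P →ₗ[R] N) (g : N →ₗ[R] M) (_ : Function.Injective f) (_ : Function.Surjective g)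
    (_ : LinearMap.range f = LinearMap.ker g),
    ProjDimLE R d P → ProjDimLE R d M → ProjDimLE R d N
  | 0, P, N, M, _, _, _, _, _, _, f, g, hf, hg, hex, hP, hM => by
    haveI : Module.Projective R P := hP
    haveI : Module.Projective R M := hM
    obtain ⟨s, hs⟩ := Module.projective_lifting_property g LinearMap.id hg
    have hsapp : ∀ m, g (s m) = m := fun m => congrFun (congrArg DFunLike.coe hs) m
    have hgf : ∀ p, g (f p) = 0 := fun p =>
      (hex ▸ LinearMap.mem_range_self f p : f p ∈ LinearMap.ker g)
    have hbij : Function.Bijective (LinearMap.coprod f s) := by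
      constructor
      · rw [← LinearMap.ker_eq_bot]
        rw [Submodule.eq_bot_iff]
        rintro ⟨p, m⟩ hpm
        have h0 : f p + s m = 0 := hpm
        have hm : m = 0 := by
          have := congrArg g h0
          rw [map_add, hgf, hsapp, zero_add, map_zero] at this
          exact this
        subst hm
        have hp : p = 0 := by
          apply hf
          rw [map_zero, add_zero] at h0
          rw [h0, map_zero]
        simp [hp]
      · intro nn
        have : nn - s (g nn) ∈ LinearMap.ker g := by
          simp [LinearMap.mem_ker, map_sub, hsapp]
        obtain ⟨p, hp⟩ := (hex ▸ this : nn - s (g nn) ∈ LinearMap.range f)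
        refine ⟨(p, g nn), ?_⟩
        show f p + s (g nn) = nn
        rw [hp]; abel
    exact Module.Projective.of_equiv (LinearEquiv.ofBijective (LinearMap.coprod f s) hbij)
  | (d+1), P, N, M, _, _, _, _, _, _, f, g, hf, hg, hex, ⟨ι, a, ha, hka⟩,
      ⟨κ, c, hc, hkc⟩ => by
    classical
    set B : Module.Basis κ R (κ →₀ R) := Finsupp.basisSingleOne with hB
    set h : (κ →₀ R) →ₗ[R] N := B.constr ℕ (fun i => (hg (c (B i))).choose) with hhdef
    have hh : g ∘ₗ h = c := by
      apply B.ext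
      intro i
      show g (h (B i)) = c (B i)
      rw [hhdef, B.constr_basis]
      exact (hg (c (B i))).choose_spec
    obtain ⟨hbsurj, f', g', hf', hg', hex'⟩ := horseshoe f g hf hex a ha c hc h hh
    have hkb : ProjDimLE R d (LinearMap.ker (LinearMap.coprod (f ∘ₗ a) h)) :=
      projDimLE_ext d f' g' hf' hg' hex' hka hkc
    set b := LinearMap.coprod (f ∘ₗ a) h with hbdef
    set e : ((ι ⊕ κ) →₀ R) ≃ₗ[R] (ι →₀ R) × (κ →₀ R) :=
      Finsupp.sumFinsuppLEquivProdFinsupp R with hedef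
    refine ⟨ι ⊕ κ, b ∘ₗ e.toLinearMap, hbsurj.comp e.surjective, ?_⟩
    have hker : Submodule.map e.toLinearMap (LinearMap.ker (b ∘ₗ e.toLinearMap))
        = LinearMap.ker b := by
      rw [LinearMap.ker_comp]
      exact Submodule.map_comap_eq_of_surjective (f := e.toLinearMap)
        (by exact e.surjective) _
    exact projDimLE_congr d
      ((LinearEquiv.ofEq _ _ hker.symm).trans
        (e.submoduleMap (LinearMap.ker (b ∘ₗ e.toLinearMap))).symm) hkb

/-- In a short exact sequence, if the sub is finitely `n`-presented and the middle
is finitely `(n+1)`-presented then the quotient is finitely `(n+1)`-presented. -/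
theorem finNPres_quot (n : ℕ) {P N M : Type u} [AddCommGroup P] [Module R P]
    [AddCommGroup N] [Module R N] [AddCommGroup M] [Module R M]
    (f : P →ₗ[R] N) (g : N →ₗ[R] M) (hf : Function.Injective f) (hg : Function.Surjective g)
    (hex : LinearMap.range f = LinearMap.ker g)
    (hP : FinNPres R n P) (hN : FinNPres R (n+1) N) : FinNPres R (n+1) M := by
  obtain ⟨k, b, hb, hkb⟩ := hN
  set c : (Fin k → R) →ₗ[R] M := g ∘ₗ b with hcdef
  have hc : Function.Surjective c := hg.comp hb
  have hle : LinearMap.ker b ≤ LinearMap.ker c := fun x hx => by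
    show g (b x) = 0
    rw [(hx : b x = 0), map_zero]
  set ι : LinearMap.ker b →ₗ[R] LinearMap.ker c := Submodule.inclusion hle with hιdef
  have hmem : ∀ x : LinearMap.ker c, b x.1 ∈ LinearMap.range f := by
    intro x
    rw [hex]
    exact (x.2 : g (b x.1) = 0)
  set β : LinearMap.ker c →ₗ[R] LinearMap.range f :=
    LinearMap.codRestrict _ (b ∘ₗ (LinearMap.ker c).subtype) hmem with hβdef
  set eqv := LinearEquiv.ofInjective f hf with heqv
  set π : LinearMap.ker c →ₗ[R] P := eqv.symm.toLinearMap ∘ₗ β with hπdef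
  have hβapp : ∀ x : LinearMap.ker c, (β x : N) = b x.1 := fun _ => rfl
  have hπsurj : Function.Surjective π := by
    intro p
    have : f p ∈ LinearMap.ker g := hex ▸ LinearMap.mem_range_self f p
    obtain ⟨x, hx⟩ := hb (f p)
    have hxc : x ∈ LinearMap.ker c := by
      show g (b x) = 0
      rw [hx]; exact this
    refine ⟨⟨x, hxc⟩, ?_⟩
    rw [hπdef]
    show eqv.symm (β ⟨x, hxc⟩) = p
    rw [LinearEquiv.symm_apply_eq]
    apply Subtype.ext
    rw [hβapp, LinearEquiv.ofInjective_apply]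
    exact hx
  have hιinj : Function.Injective ι := Submodule.inclusion_injective hle
  have hexι : LinearMap.range ι = LinearMap.ker π := by
    apply le_antisymm
    · rintro z ⟨x, rfl⟩
      show π (ι x) = 0
      rw [hπdef]
      show eqv.symm (β (ι x)) = 0
      rw [LinearEquiv.symm_apply_eq, map_zero]
      apply Subtype.ext
      rw [hβapp]
      exact (x.2 : b x.1 = 0)
    · rintro ⟨x, hx⟩ hzk
      have h0 : eqv.symm (β ⟨x, hx⟩) = 0 := hzk
      rw [LinearEquiv.symm_apply_eq, map_zero] at h0
      have hbx : b x = 0 := by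
        have := congrArg Subtype.val h0
        rw [hβapp] at this
        exact this
      exact ⟨⟨x, hbx⟩, rfl⟩
  have hkc : FinNPres R n (LinearMap.ker c) :=
    finNPres_ext n ι π hιinj hπsurj hexι hkb hP
  exact ⟨k, c, hc, hkc⟩

end Aux

/-- `M` is an `(n,d)`-coherent `R`-module: it is finitely `n`-presented and every finitely
`(n-1)`-presented submodule of `M` of projective dimension at most `d-1` is finitely
`n`-presented. -/
def NDCohMod (R : Type u) [Ring R] (n : ℕ) (d : ℕ∞) (M : Type u)
    [AddCommGroup M] [Module R M] : Prop :=
  FinNPres R n M ∧ ∀ (N : Submodule R M), FinNPres R (n - 1) N →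
    ProjDimLE' R (d - 1) N → FinNPres R n N

/-- Let `P ↣ N ↠ M` be a short exact sequence of `R`-modules with `N` an `(n,d)`-coherent
module.  If `P` is finitely `(n-1)`-presented of projective dimension at most `d-1`, then
both `M` and `P` are `(n,d)`-coherent. -/
theorem ndCohMod_of_ses (R : Type u) [Ring R] (n : ℕ) (hn : 1 ≤ n) (d : ℕ∞) (hd : 1 ≤ d)
    (P N M : Type u) [AddCommGroup P] [Module R P] [AddCommGroup N] [Module R N]
    [AddCommGroup M] [Module R M] (f : P →ₗ[R] N) (g : N →ₗ[R] M)
    (hf : Function.Injective f) (hg : Function.Surjective g)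
    (hex : LinearMap.range f = LinearMap.ker g)
    (hN : NDCohMod R n d N) (hP₁ : FinNPres R (n - 1) P) (hP₂ : ProjDimLE' R (d - 1) P) :
    NDCohMod R n d M ∧ NDCohMod R n d P := by
  obtain ⟨m, rfl⟩ : ∃ m, n = m + 1 := ⟨n - 1, (Nat.succ_pred_eq_of_pos hn).symm⟩
  have hsub : m + 1 - 1 = m := rfl
  rw [hsub] at hP₁
  set eqvP : P ≃ₗ[R] LinearMap.range f := LinearEquiv.ofInjective f hf with heqvP
  -- P is finitely (m+1)-presented
  have hrangeN : FinNPres R (m + 1) (LinearMap.range f) := by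
    apply hN.2 (LinearMap.range f)
    · exact finNPres_congr m eqvP hP₁
    · exact fun k hk => projDimLE_congr k eqvP (hP₂ k hk)
  have hPn : FinNPres R (m + 1) P := finNPres_congr _ eqvP.symm hrangeN
  constructor
  · -- M is (n,d)-coherent
    constructor
    · exact finNPres_quot m f g hf hg hex hP₁ hN.1
    · intro Q hQ₁ hQ₂
      rw [hsub] at hQ₁
      set Q' := Submodule.comap g Q with hQ'def
      have hfmem : ∀ p, f p ∈ Q' := by
        intro p
        have : f p ∈ LinearMap.ker g := hex ▸ LinearMap.mem_range_self f p
        show g (f p) ∈ Q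
        rw [(this : g (f p) = 0)]
        exact Q.zero_mem
      set f₀ : P →ₗ[R] Q' := LinearMap.codRestrict Q' f hfmem with hf₀def
      set g₀ : Q' →ₗ[R] Q := g.restrict (fun x hx => hx) with hg₀def
      have hf₀ : Function.Injective f₀ := by
        intro x y hxy
        exact hf (congrArg Subtype.val hxy)
      have hg₀ : Function.Surjective g₀ := by
        rintro ⟨q, hq⟩
        obtain ⟨nn, hnn⟩ := hg q
        have hmem : nn ∈ Q' := by show g nn ∈ Q; rw [hnn]; exact hq
        exact ⟨⟨nn, hmem⟩, Subtype.ext hnn⟩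
      have hex₀ : LinearMap.range f₀ = LinearMap.ker g₀ := by
        apply le_antisymm
        · rintro z ⟨p, rfl⟩
          apply Subtype.ext
          show g (f p) = 0
          exact (hex ▸ LinearMap.mem_range_self f p : f p ∈ LinearMap.ker g)
        · rintro ⟨x, hx⟩ hz
          have h0 : g x = 0 := congrArg Subtype.val (hz : g₀ _ = 0)
          obtain ⟨p, hp⟩ := (hex ▸ (h0 : x ∈ LinearMap.ker g) : x ∈ LinearMap.range f)
          exact ⟨p, Subtype.ext hp⟩
      have hQ'₁ : FinNPres R m Q' := finNPres_ext m f₀ g₀ hf₀ hg₀ hex₀ hP₁ hQ₁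
      have hQ'₂ : ProjDimLE' R (d - 1) Q' :=
        fun k hk => projDimLE_ext k f₀ g₀ hf₀ hg₀ hex₀ (hP₂ k hk) (hQ₂ k hk)
      have hQ' : FinNPres R (m + 1) Q' := hN.2 Q' hQ'₁ hQ'₂
      exact finNPres_quot m f₀ g₀ hf₀ hg₀ hex₀ hP₁ hQ'
  · -- P is (n,d)-coherent
    refine ⟨hPn, ?_⟩
    intro Q hQ₁ hQ₂
    rw [hsub] at hQ₁
    set eqvQ := Submodule.equivMapOfInjective f hf Q with heqvQ
    have := hN.2 (Submodule.map f Q) (finNPres_congr m eqvQ hQ₁)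
      (fun k hk => projDimLE_congr k eqvQ (hQ₂ k hk))
    exact finNPres_congr _ eqvQ.symm this
end
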